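/- For every graph G and non-free vertex v, with Q_1 = J_{G_v} and Q_2 = (x_v,y_v) + J_{G\v}, one has Q_1 + Q_2 = (x_v, y_v) + J_{G_v \ v}. -/

import Mathlib

open MvPolynomial

/-- The binomial edge ideal of a graph `G`, in the polynomial ring whose variables
`x_v = X (Sum.inl v)` and `y_v = X (Sum.inr v)` are indexed by two copies of the
vertex set. -/
noncomputable def beIdeal (K : Type) [Field K] {V : Type} (G : SimpleGraph V) :
    Ideal (MvPolynomial (V ⊕ V) K) :=
  Ideal.span { f | ∃ u v, G.Adj u v ∧
    f = X (Sum.inl u) * X (Sum.inr v) - X (Sum.inl v) * X (Sum.inr u) }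

/-- `s` is a maximal clique of `G`. -/
def IsMaxClique {V : Type} (G : SimpleGraph V) (s : Set V) : Prop :=
  G.IsClique s ∧ ∀ t, G.IsClique t → s ⊆ t → s = t

/-- A vertex is free if it belongs to exactly one maximal clique. -/
def IsFreeVertex {V : Type} (G : SimpleGraph V) (v : V) : Prop :=
  ∃! s : Set V, IsMaxClique G s ∧ v ∈ s

/-- The number of maximal cliques of `G`. -/
noncomputable def numMaxCliques {V : Type} (G : SimpleGraph V) : ℕ :=
  Set.ncard { s : Set V | IsMaxClique G s }

/-- `G_v`: the graph `G` with all pairs of neighbours of `v` joined by an edge. -/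
def addNbhd {V : Type} (G : SimpleGraph V) (v : V) : SimpleGraph V where
  Adj u w := u ≠ w ∧ (G.Adj u w ∨ (G.Adj v u ∧ G.Adj v w))
  symm := by
    constructor
    intro u w h
    exact ⟨h.1.symm, by rcases h.2 with h' | h'
                        · exact Or.inl h'.symm
                        · exact Or.inr ⟨h'.2, h'.1⟩⟩
  loopless := by constructor; intro u h; exact h.1 rfl

/-- Deletion of the vertex `v` (keeping `v` as an isolated vertex, so that the
ambient polynomial ring is unchanged). -/
def delVert {V : Type} (G : SimpleGraph V) (v : V) : SimpleGraph V where
  Adj u w := G.Adj u w ∧ u ≠ v ∧ w ≠ v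
  symm := by constructor; intro u w h; exact ⟨h.1.symm, h.2.2, h.2.1⟩
  loopless := by constructor; intro u h; exact G.irrefl h.1

/-- For a non-free vertex `v` of `G`, with `Q₁ = J_{G_v}` and
`Q₂ = (x_v, y_v) + J_{G \ v}`, one has `Q₁ + Q₂ = (x_v, y_v) + J_{G_v \ v}`. -/
theorem beIdeal_sum_of_not_free (K : Type) [Field K] {V : Type} [Fintype V]
    (G : SimpleGraph V) (v : V) (hv : ¬ IsFreeVertex G v) :
    beIdeal K (addNbhd G v) ⊔
        (Ideal.span {(X (Sum.inl v) : MvPolynomial (V ⊕ V) K), X (Sum.inr v)} ⊔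
          beIdeal K (delVert G v)) =
      Ideal.span {(X (Sum.inl v) : MvPolynomial (V ⊕ V) K), X (Sum.inr v)} ⊔
        beIdeal K (delVert (addNbhd G v) v) := by
  have mono : ∀ (G1 G2 : SimpleGraph V), (∀ u w, G1.Adj u w → G2.Adj u w) →
      beIdeal K G1 ≤ beIdeal K G2 := by
    intro G1 G2 h
    apply Ideal.span_mono
    rintro f ⟨u, w, hadj, rfl⟩
    exact ⟨u, w, h u w hadj, rfl⟩
  apply le_antisymm
  · refine sup_le ?_ (sup_le le_sup_left ?_)
    · rw [beIdeal, Ideal.span_le]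
      rintro f ⟨u, w, hadj, rfl⟩
      by_cases hu : u = v
      · subst hu
        apply Ideal.mem_sup_left
        have hx : (X (Sum.inl u) : MvPolynomial (V ⊕ V) K) ∈
            Ideal.span {(X (Sum.inl u) : MvPolynomial (V ⊕ V) K), X (Sum.inr u)} :=
          Ideal.subset_span (by simp)
        have hy : (X (Sum.inr u) : MvPolynomial (V ⊕ V) K) ∈
            Ideal.span {(X (Sum.inl u) : MvPolynomial (V ⊕ V) K), X (Sum.inr u)} :=
          Ideal.subset_span (by simp)
        exact sub_mem (Ideal.mul_mem_right _ _ hx) (Ideal.mul_mem_left _ _ hy)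
      · by_cases hw : w = v
        · subst hw
          apply Ideal.mem_sup_left
          have hx : (X (Sum.inl w) : MvPolynomial (V ⊕ V) K) ∈
              Ideal.span {(X (Sum.inl w) : MvPolynomial (V ⊕ V) K), X (Sum.inr w)} :=
            Ideal.subset_span (by simp)
          have hy : (X (Sum.inr w) : MvPolynomial (V ⊕ V) K) ∈
              Ideal.span {(X (Sum.inl w) : MvPolynomial (V ⊕ V) K), X (Sum.inr w)} :=
            Ideal.subset_span (by simp)
          exact sub_mem (Ideal.mul_mem_left _ _ hy) (Ideal.mul_mem_right _ _ hx)
        · exact Ideal.mem_sup_right (Ideal.subset_span ⟨u, w, ⟨hadj, hu, hw⟩, rfl⟩)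
    · refine le_trans ?_ le_sup_right
      apply mono
      rintro u w ⟨hadj, hu, hw⟩
      exact ⟨⟨hadj.ne, Or.inl hadj⟩, hu, hw⟩
  · refine sup_le (le_trans le_sup_left le_sup_right) (le_trans ?_ le_sup_left)
    apply mono
    rintro u w ⟨hadj, _, _⟩
    exact hadj
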